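/- Let G be a finite connected simple graph, let U be any set of vertices, and let S_U be the set of vertices that have no tight upper certificate in U (i.e., v ∈ S_U iff there is no x ∈ U with e(v) = d(v,x) + e(x)). If v ∈ S_U has minimum eccentricity among vertices of S_U, then v has no tight upper certificate other than itself (i.e., e(v) = d(v,x) + e(x) with x a vertex implies x = v). -/
import Mathlib

/-- The eccentricity of a vertex `u`: the maximum shortest-path distance from `u`. -/
noncomputable def graphEcc {V : Type*} [Fintype V] (G : SimpleGraph V) (u : V) : ℕ :=
  Finset.univ.sup (G.dist u)

lemma graphEcc_le_dist_add {V : Type*} [Fintype V] (G : SimpleGraph V) (hG : G.Connected)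
    (u y : V) : graphEcc G u ≤ G.dist u y + graphEcc G y := by
  apply Finset.sup_le
  intro z _
  calc G.dist u z ≤ G.dist u y + G.dist y z := hG.dist_triangle
    _ ≤ G.dist u y + graphEcc G y := by
        exact Nat.add_le_add_left (Finset.le_sup (Finset.mem_univ z)) _

theorem minEcc_no_other_tight_upper_certificate {V : Type*} [Fintype V] (G : SimpleGraph V)
    (hG : G.Connected) (U : Set V) (SU : Set V)
    (hSU : SU = {w : V | ¬ ∃ x ∈ U, graphEcc G w = G.dist w x + graphEcc G x})
    (v : V) (hv : v ∈ SU) (hmin : ∀ w ∈ SU, graphEcc G v ≤ graphEcc G w) :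
    ∀ x : V, graphEcc G v = G.dist v x + graphEcc G x → x = v := by
  intro x hx
  by_contra hne
  have hdpos : 0 < G.dist v x := hG.pos_dist_of_ne (fun h => hne h.symm)
  have hlt : graphEcc G x < graphEcc G v := by omega
  have hxSU : x ∈ SU := by
    rw [hSU]
    rintro ⟨y, hy, hxy⟩
    rw [hSU] at hv
    exact hv ⟨y, hy, le_antisymm (graphEcc_le_dist_add G hG v y)
      (by
        have := hG.dist_triangle (u := v) (v := x) (w := y)
        omega)⟩
  exact absurd (hmin x hxSU) (not_le.mpr hlt)
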